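/- (Sandwich ratio lemma of Mitavskiy–Rowe, Lemma 55.) Let π be a stationary distribution of a Markov transition matrix {p_{x→y}} on a finite state space X. Let A, B be complementary subsets of X (A ∩ B = ∅, A ∪ B = X) with π(A) > 0 and π(B) > 0. Suppose U ⊆ X satisfies π(U ∩ A)/π(A) < δ and π(U ∩ B)/π(B) < δ for some 0 < δ < 1. Suppose there are constants λ₁, κ₁, λ₂, κ₂ such that for all b ∈ Uᶜ ∩ B, λ₁ ≤ p_{b→A} ≤ κ₁ and for all a ∈ Uᶜ ∩ A, λ₂ ≤ p_{a→B} ≤ κ₂, where p_{x→Y} = ∑_{y∈Y} p_{x→y}. Then ((1−δ)λ₁)/((1−δ)κ₂ + δ) ≤ π(A)/π(B) ≤ ((1−δ)κ₁ + δ)/((1−δ)λ₂), provided λ₂ > 0. -/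
import Mathlib


theorem stmt_11 {X : Type*} [Fintype X] [DecidableEq X]
    (p : X → X → ℝ) (π : X → ℝ)
    (hpnonneg : ∀ x y, 0 ≤ p x y)
    (hprow : ∀ x, ∑ y, p x y = 1)
    (hπnonneg : ∀ x, 0 ≤ π x)
    (hπsum : ∑ x, π x = 1)
    (hstat : ∀ y, ∑ x, π x * p x y = π y)
    (A B : Finset X)
    (hdisj : A ∩ B = ∅) (hunion : A ∪ B = Finset.univ)
    (hA : 0 < ∑ x ∈ A, π x) (hB : 0 < ∑ x ∈ B, π x)
    (U : Finset X) (δ : ℝ) (hδ0 : 0 < δ) (hδ1 : δ < 1)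
    (hUA : (∑ x ∈ U ∩ A, π x) / (∑ x ∈ A, π x) < δ)
    (hUB : (∑ x ∈ U ∩ B, π x) / (∑ x ∈ B, π x) < δ)
    (l₁ k₁ l₂ k₂ : ℝ)
    (hl₁ : 0 ≤ l₁) (hl₂ : 0 < l₂) (hk₁ : 0 ≤ k₁) (hk₂ : 0 ≤ k₂)
    (hbB : ∀ b ∈ Uᶜ ∩ B, l₁ ≤ ∑ y ∈ A, p b y ∧ ∑ y ∈ A, p b y ≤ k₁)
    (hbA : ∀ a ∈ Uᶜ ∩ A, l₂ ≤ ∑ y ∈ B, p a y ∧ ∑ y ∈ B, p a y ≤ k₂) :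
    ((1 - δ) * l₁) / ((1 - δ) * k₂ + δ) ≤ (∑ x ∈ A, π x) / (∑ x ∈ B, π x) ∧
    (∑ x ∈ A, π x) / (∑ x ∈ B, π x) ≤ ((1 - δ) * k₁ + δ) / ((1 - δ) * l₂) := by
  have hdisjAB : Disjoint A B := Finset.disjoint_iff_inter_eq_empty.mpr hdisj
  have hsplitAB : ∀ f : X → ℝ, ∑ x, f x = ∑ x ∈ A, f x + ∑ x ∈ B, f x := by
    intro f; rw [← hunion, Finset.sum_union hdisjAB]
  have hpAB : ∀ x, (∑ y ∈ A, p x y) + (∑ y ∈ B, p x y) = 1 := by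
    intro x; rw [← Finset.sum_union hdisjAB, hunion, hprow]
  have hpAnonneg : ∀ x, 0 ≤ ∑ y ∈ A, p x y :=
    fun x => Finset.sum_nonneg fun y _ => hpnonneg x y
  have hpBnonneg : ∀ x, 0 ≤ ∑ y ∈ B, p x y :=
    fun x => Finset.sum_nonneg fun y _ => hpnonneg x y
  have hpAle1 : ∀ x, ∑ y ∈ A, p x y ≤ 1 := by
    intro x; have := hpAB x; have := hpBnonneg x; linarith
  have hpBle1 : ∀ x, ∑ y ∈ B, p x y ≤ 1 := by
    intro x; have := hpAB x; have := hpAnonneg x; linarith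
  -- flow balance
  have key : ∑ x ∈ A, π x * ∑ y ∈ B, p x y = ∑ x ∈ B, π x * ∑ y ∈ A, p x y := by
    have h1 : ∑ y ∈ A, π y
        = ∑ x ∈ A, π x * ∑ y ∈ A, p x y + ∑ x ∈ B, π x * ∑ y ∈ A, p x y := by
      calc ∑ y ∈ A, π y = ∑ y ∈ A, ∑ x, π x * p x y :=
            Finset.sum_congr rfl fun y _ => (hstat y).symm
        _ = ∑ x, ∑ y ∈ A, π x * p x y := Finset.sum_comm
        _ = ∑ x, π x * ∑ y ∈ A, p x y :=
            Finset.sum_congr rfl fun x _ => (Finset.mul_sum _ _ _).symm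
        _ = _ := hsplitAB _
    have h2 : ∑ x ∈ A, π x
        = ∑ x ∈ A, π x * ∑ y ∈ A, p x y + ∑ x ∈ A, π x * ∑ y ∈ B, p x y := by
      rw [← Finset.sum_add_distrib]
      refine Finset.sum_congr rfl fun x _ => ?_
      rw [← mul_add, hpAB x, mul_one]
    linarith
  have hsplitU : ∀ (S : Finset X) (f : X → ℝ),
      ∑ x ∈ S, f x = ∑ x ∈ S ∩ U, f x + ∑ x ∈ S \ U, f x :=
    fun S f => (Finset.sum_inter_add_sum_sdiff S U f).symm
  have hUAlt : ∑ x ∈ A ∩ U, π x < δ * ∑ x ∈ A, π x := by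
    rw [Finset.inter_comm]; exact (div_lt_iff₀ hA).mp hUA
  have hUBlt : ∑ x ∈ B ∩ U, π x < δ * ∑ x ∈ B, π x := by
    rw [Finset.inter_comm]; exact (div_lt_iff₀ hB).mp hUB
  have hmemB : ∀ x ∈ B \ U, x ∈ Uᶜ ∩ B := by
    intro x hx
    simp only [Finset.mem_sdiff] at hx
    simp [Finset.mem_inter, Finset.mem_compl, hx.1, hx.2]
  have hmemA : ∀ x ∈ A \ U, x ∈ Uᶜ ∩ A := by
    intro x hx
    simp only [Finset.mem_sdiff] at hx
    simp [Finset.mem_inter, Finset.mem_compl, hx.1, hx.2]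
  have hπUA : 0 ≤ ∑ x ∈ A ∩ U, π x := Finset.sum_nonneg fun x _ => hπnonneg x
  have hπUB : 0 ≤ ∑ x ∈ B ∩ U, π x := Finset.sum_nonneg fun x _ => hπnonneg x
  have hsB := hsplitU B π
  have hsA := hsplitU A π
  -- lower bound on F_B
  have hFBlow : l₁ * (1 - δ) * (∑ x ∈ B, π x) ≤ ∑ x ∈ B, π x * ∑ y ∈ A, p x y := by
    have h1 : ∑ x ∈ B \ U, π x * l₁ ≤ ∑ x ∈ B \ U, π x * ∑ y ∈ A, p x y :=
      Finset.sum_le_sum fun x hx =>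
        mul_le_mul_of_nonneg_left (hbB x (hmemB x hx)).1 (hπnonneg x)
    have h2 : 0 ≤ ∑ x ∈ B ∩ U, π x * ∑ y ∈ A, p x y :=
      Finset.sum_nonneg fun x _ => mul_nonneg (hπnonneg x) (hpAnonneg x)
    have h3 : ∑ x ∈ B \ U, π x * l₁ = (∑ x ∈ B \ U, π x) * l₁ :=
      (Finset.sum_mul _ _ _).symm
    have h4 : (1 - δ) * (∑ x ∈ B, π x) ≤ ∑ x ∈ B \ U, π x := by linarith
    have h5 : l₁ * ((1 - δ) * (∑ x ∈ B, π x)) ≤ l₁ * (∑ x ∈ B \ U, π x) :=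
      mul_le_mul_of_nonneg_left h4 hl₁
    have h6 := hsplitU B (fun x => π x * ∑ y ∈ A, p x y)
    linarith
  -- lower bound on F_A
  have hFAlow : l₂ * (1 - δ) * (∑ x ∈ A, π x) ≤ ∑ x ∈ A, π x * ∑ y ∈ B, p x y := by
    have h1 : ∑ x ∈ A \ U, π x * l₂ ≤ ∑ x ∈ A \ U, π x * ∑ y ∈ B, p x y :=
      Finset.sum_le_sum fun x hx =>
        mul_le_mul_of_nonneg_left (hbA x (hmemA x hx)).1 (hπnonneg x)
    have h2 : 0 ≤ ∑ x ∈ A ∩ U, π x * ∑ y ∈ B, p x y :=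
      Finset.sum_nonneg fun x _ => mul_nonneg (hπnonneg x) (hpBnonneg x)
    have h3 : ∑ x ∈ A \ U, π x * l₂ = (∑ x ∈ A \ U, π x) * l₂ :=
      (Finset.sum_mul _ _ _).symm
    have h4 : (1 - δ) * (∑ x ∈ A, π x) ≤ ∑ x ∈ A \ U, π x := by linarith
    have h5 : l₂ * ((1 - δ) * (∑ x ∈ A, π x)) ≤ l₂ * (∑ x ∈ A \ U, π x) :=
      mul_le_mul_of_nonneg_left h4 hl₂.le
    have h6 := hsplitU A (fun x => π x * ∑ y ∈ B, p x y)
    linarith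
  -- upper bound on F_B
  have hFBhigh : ∑ x ∈ B, π x * ∑ y ∈ A, p x y ≤ ((1 - δ) * k₁ + δ) * (∑ x ∈ B, π x) := by
    set k₁' := min k₁ 1 with hk₁'
    have hle : k₁' ≤ k₁ := min_le_left _ _
    have hle1 : k₁' ≤ 1 := min_le_right _ _
    have h1 : ∑ x ∈ B \ U, π x * ∑ y ∈ A, p x y ≤ ∑ x ∈ B \ U, π x * k₁' :=
      Finset.sum_le_sum fun x hx =>
        mul_le_mul_of_nonneg_left (le_min (hbB x (hmemB x hx)).2 (hpAle1 x)) (hπnonneg x)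
    have h2 : ∑ x ∈ B ∩ U, π x * ∑ y ∈ A, p x y ≤ ∑ x ∈ B ∩ U, π x :=
      Finset.sum_le_sum fun x _ => mul_le_of_le_one_right (hπnonneg x) (hpAle1 x)
    have h3 : ∑ x ∈ B \ U, π x * k₁' = (∑ x ∈ B \ U, π x) * k₁' :=
      (Finset.sum_mul _ _ _).symm
    have hc : ∑ x ∈ B \ U, π x = (∑ x ∈ B, π x) - ∑ x ∈ B ∩ U, π x := by linarith
    rw [h3, hc] at h1
    have h6 := hsplitU B (fun x => π x * ∑ y ∈ A, p x y)
    have hgoal : (∑ x ∈ B ∩ U, π x) + ((∑ x ∈ B, π x) - ∑ x ∈ B ∩ U, π x) * k₁'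
        ≤ ((1 - δ) * k₁ + δ) * (∑ x ∈ B, π x) := by
      linarith [mul_nonneg (sub_nonneg.mpr hle1) (by linarith : (0:ℝ) ≤ δ * (∑ x ∈ B, π x) - ∑ x ∈ B ∩ U, π x),
        mul_nonneg (mul_nonneg (by linarith : (0:ℝ) ≤ 1 - δ) (sub_nonneg.mpr hle)) hB.le]
    linarith
  -- upper bound on F_A
  have hFAhigh : ∑ x ∈ A, π x * ∑ y ∈ B, p x y ≤ ((1 - δ) * k₂ + δ) * (∑ x ∈ A, π x) := by
    set k₂' := min k₂ 1 with hk₂'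
    have hle : k₂' ≤ k₂ := min_le_left _ _
    have hle1 : k₂' ≤ 1 := min_le_right _ _
    have h1 : ∑ x ∈ A \ U, π x * ∑ y ∈ B, p x y ≤ ∑ x ∈ A \ U, π x * k₂' :=
      Finset.sum_le_sum fun x hx =>
        mul_le_mul_of_nonneg_left (le_min (hbA x (hmemA x hx)).2 (hpBle1 x)) (hπnonneg x)
    have h2 : ∑ x ∈ A ∩ U, π x * ∑ y ∈ B, p x y ≤ ∑ x ∈ A ∩ U, π x :=
      Finset.sum_le_sum fun x _ => mul_le_of_le_one_right (hπnonneg x) (hpBle1 x)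
    have h3 : ∑ x ∈ A \ U, π x * k₂' = (∑ x ∈ A \ U, π x) * k₂' :=
      (Finset.sum_mul _ _ _).symm
    have hc : ∑ x ∈ A \ U, π x = (∑ x ∈ A, π x) - ∑ x ∈ A ∩ U, π x := by linarith
    rw [h3, hc] at h1
    have h6 := hsplitU A (fun x => π x * ∑ y ∈ B, p x y)
    have hgoal : (∑ x ∈ A ∩ U, π x) + ((∑ x ∈ A, π x) - ∑ x ∈ A ∩ U, π x) * k₂'
        ≤ ((1 - δ) * k₂ + δ) * (∑ x ∈ A, π x) := by
      linarith [mul_nonneg (sub_nonneg.mpr hle1) (by linarith : (0:ℝ) ≤ δ * (∑ x ∈ A, π x) - ∑ x ∈ A ∩ U, π x),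
        mul_nonneg (mul_nonneg (by linarith : (0:ℝ) ≤ 1 - δ) (sub_nonneg.mpr hle)) hA.le]
    linarith
  have hd1 : (0:ℝ) < (1 - δ) * k₂ + δ := by
    have := mul_nonneg (by linarith : (0:ℝ) ≤ 1 - δ) hk₂; linarith
  have hd2 : (0:ℝ) < (1 - δ) * l₂ := mul_pos (by linarith) hl₂
  constructor
  · rw [div_le_div_iff₀ hd1 hB]
    linarith
  · rw [div_le_div_iff₀ hB hd2]
    linarith
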